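/- Let $p_1$ and $p_2$ be real polynomials of degree at most $n$, each satisfying the equioscillation property of modulus 1 on $[0,a]$ (possibly with different node sets), and suppose $|p_1(x)| \le 1$ and $|p_2(x)| \le 1$ for all $x \in [0,a]$. Then $p_1 = p_2$. -/

import Mathlib

open Polynomial

lemma sq_dvd_of_root_root_deriv {p : ℝ[X]} {r : ℝ}
    (h0 : p.IsRoot r) (h1 : (derivative p).IsRoot r) : (X - C r)^2 ∣ p := by
  obtain ⟨g, hg⟩ := (dvd_iff_isRoot (p := p) (a := r)).2 h0
  have hg' : g.IsRoot r := by
    have hdd := congrArg derivative hg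
    rw [derivative_mul, derivative_sub, derivative_X, derivative_C] at hdd
    have h2 : (derivative p).eval r = g.eval r := by rw [hdd]; simp
    rwa [IsRoot, ← h2]
  obtain ⟨h, hh⟩ := (dvd_iff_isRoot (p := g) (a := r)).2 hg'
  exact ⟨h, by rw [hg, hh]; ring⟩

section
variable {m : ℕ} {a : ℝ} {p : ℝ[X]} {t : Fin (m+2) → ℝ}

lemma deriv_ne_zero (hd : p.natDegree ≤ m+1) (ht : StrictMono t)
    (hev : ∀ i, p.eval (t i) = (-1:ℝ)^(i:ℕ)) : derivative p ≠ 0 := by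
  intro h
  have hnd : p.natDegree = 0 := natDegree_eq_zero_of_derivative_eq_zero h
  have hp : p = C (p.coeff 0) := eq_C_of_natDegree_le_zero hnd.le
  have h0 := hev 0
  have h1 := hev ⟨1, by omega⟩
  rw [hp] at h0 h1
  simp at h0 h1
  rw [h0] at h1
  norm_num at h1

lemma interior_root (ha0 : 0 ≤ t 0) (hla : t (Fin.last (m+1)) ≤ a)
    (ht : StrictMono t)
    (hev : ∀ i, p.eval (t i) = (-1:ℝ)^(i:ℕ))
    (hb : ∀ x ∈ Set.Icc (0:ℝ) a, |p.eval x| ≤ 1)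
    {i : Fin (m+2)} (hi0 : i ≠ 0) (hil : i ≠ Fin.last (m+1)) :
    (derivative p).IsRoot (t i) := by
  have hti0 : 0 < t i := lt_of_le_of_lt ha0 (ht (Fin.pos_of_ne_zero hi0))
  have htia : t i < a := lt_of_lt_of_le (ht (lt_of_le_of_ne (Fin.le_last i) hil)) hla
  set g : ℝ → ℝ := fun x => (-1:ℝ)^(i:ℕ) * p.eval x with hg
  have hmem : Set.Icc (0:ℝ) a ∈ nhds (t i) := Icc_mem_nhds hti0 htia
  have hloc : IsLocalMax g (t i) := by
    filter_upwards [hmem] with x hx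
    have h1 : g x ≤ |p.eval x| := by
      calc g x ≤ |g x| := le_abs_self _
        _ = |(-1:ℝ)^(i:ℕ)| * |p.eval x| := abs_mul _ _
        _ = |p.eval x| := by simp [abs_pow]
    have h2 : g (t i) = 1 := by
      simp only [hg, hev i]
      rw [← pow_add]
      simp [pow_mul, ← two_mul]
    rw [h2]
    exact h1.trans (hb x hx)
  have hderiv : deriv g (t i) = 0 := hloc.deriv_eq_zero
  have : deriv g (t i) = (-1:ℝ)^(i:ℕ) * (derivative p).eval (t i) := by
    rw [hg]
    rw [deriv_const_mul _ (Polynomial.differentiableAt p)]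
    rw [Polynomial.deriv]
  rw [this] at hderiv
  have hne : ((-1:ℝ))^(i:ℕ) ≠ 0 := by
    simp
  exact (mul_eq_zero.mp hderiv).resolve_left hne

lemma no_extra_root (hd : p.natDegree ≤ m+1) (ha0 : 0 ≤ t 0)
    (hla : t (Fin.last (m+1)) ≤ a) (ht : StrictMono t)
    (hev : ∀ i, p.eval (t i) = (-1:ℝ)^(i:ℕ))
    (hb : ∀ x ∈ Set.Icc (0:ℝ) a, |p.eval x| ≤ 1)
    {ξ : ℝ} (hξ : (derivative p).IsRoot ξ)
    (hξT : ∀ i : Fin (m+2), i ≠ 0 → i ≠ Fin.last (m+1) → ξ ≠ t i) : False := by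
  classical
  have hp' : derivative p ≠ 0 := deriv_ne_zero hd ht hev
  set T : Finset ℝ :=
    ((Finset.univ.erase 0).erase (Fin.last (m+1))).image t with hT
  have hlast0 : (Fin.last (m+1)) ≠ (0 : Fin (m+2)) := by
    intro h
    have := congrArg Fin.val h
    simp [Fin.last] at this
  have hTcard : T.card = m := by
    rw [hT, Finset.card_image_of_injective _ ht.injective,
      Finset.card_erase_of_mem (by simp [Finset.mem_erase, hlast0]),
      Finset.card_erase_of_mem (by simp)]
    simp
  have hξnT : ξ ∉ T := by
    intro hmem
    rw [hT, Finset.mem_image] at hmem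
    obtain ⟨i, hiT, hit⟩ := hmem
    simp [Finset.mem_erase] at hiT
    exact hξT i hiT.2 hiT.1 hit.symm
  have hsub : (insert ξ T).val ⊆ (derivative p).roots := by
    intro r hr
    rw [Finset.mem_val, Finset.mem_insert] at hr
    rw [mem_roots hp']
    rcases hr with rfl | hr
    · exact hξ
    · rw [hT, Finset.mem_image] at hr
      obtain ⟨i, hiT, rfl⟩ := hr
      simp [Finset.mem_erase] at hiT
      exact interior_root ha0 hla ht hev hb hiT.2 hiT.1
  have hc := Polynomial.card_le_degree_of_subset_roots hsub
  rw [Finset.card_insert_of_notMem hξnT, hTcard] at hc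
  have hdd : (derivative p).natDegree ≤ m :=
    (natDegree_derivative_le p).trans (Nat.sub_le_sub_right hd 1)
  omega

lemma t_zero_eq (hd : p.natDegree ≤ m+1) (ha0 : 0 ≤ t 0)
    (hla : t (Fin.last (m+1)) ≤ a) (ht : StrictMono t)
    (hev : ∀ i, p.eval (t i) = (-1:ℝ)^(i:ℕ))
    (hb : ∀ x ∈ Set.Icc (0:ℝ) a, |p.eval x| ≤ 1)
    (hroot : ∀ ξ : ℝ, (derivative p).IsRoot ξ →
      (∀ i : Fin (m+2), i ≠ 0 → i ≠ Fin.last (m+1) → ξ ≠ t i) → False) :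
    t 0 = 0 := by
  by_contra h
  have h0lt : 0 < t 0 := lt_of_le_of_ne ha0 (Ne.symm h)
  set i1 : Fin (m+2) := ⟨1, by omega⟩ with hi1
  have ht01 : t 0 < t i1 := ht (by simp [Fin.lt_def, hi1])
  have hi1a : t i1 ≤ a := le_trans (ht.monotone (Fin.le_last i1)) hla
  have hIsub : Set.Icc (0:ℝ) (t i1) ⊆ Set.Icc 0 a := Set.Icc_subset_Icc le_rfl hi1a
  obtain ⟨ξ, hξI, hmax⟩ := isCompact_Icc.exists_isMaxOn
    (Set.nonempty_Icc.2 (le_trans ha0 ht01.le))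
    ((Polynomial.continuous p).continuousOn (s := Set.Icc 0 (t i1)))
  have hfξ : p.eval ξ = 1 := by
    have h1 : p.eval (t 0) ≤ p.eval ξ := isMaxOn_iff.mp hmax _ ⟨ha0, ht01.le⟩
    rw [hev 0] at h1
    have h2 : p.eval ξ ≤ 1 := le_trans (le_abs_self _) (hb ξ (hIsub hξI))
    norm_num at h1
    linarith
  have hξne1 : ξ ≠ t i1 := by
    intro hh
    rw [hh, hev i1] at hfξ
    norm_num [hi1] at hfξ
  obtain ⟨ξ', hξ'I, hmax'⟩ :
      ∃ ξ' ∈ Set.Ioo (0:ℝ) (t i1), IsMaxOn (fun x => p.eval x) (Set.Icc 0 (t i1)) ξ' := by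
    rcases eq_or_ne ξ 0 with rfl | hne0
    · refine ⟨t 0, ⟨h0lt, ht01⟩, isMaxOn_iff.mpr fun x hx => ?_⟩
      show p.eval x ≤ p.eval (t 0)
      rw [hev 0]
      have := isMaxOn_iff.mp hmax x hx
      rw [hfξ] at this
      simpa using this
    · exact ⟨ξ, ⟨lt_of_le_of_ne hξI.1 (Ne.symm hne0), lt_of_le_of_ne hξI.2 hξne1⟩, hmax⟩
  have hloc : IsLocalMax (fun x => p.eval x) ξ' :=
    hmax'.isLocalMax (Icc_mem_nhds hξ'I.1 hξ'I.2)
  have hder : (derivative p).IsRoot ξ' := by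
    have := hloc.deriv_eq_zero
    rwa [Polynomial.deriv] at this
  refine hroot ξ' hder fun i hi0 _ hhe => ?_
  have : t i1 ≤ t i := by
    apply ht.monotone
    rw [Fin.le_def]
    simp [hi1]
    exact Nat.one_le_iff_ne_zero.2 (fun hh => hi0 (Fin.ext hh))
  rw [hhe] at hξ'I
  exact absurd hξ'I.2 (not_lt.2 this)

lemma t_last_eq (hd : p.natDegree ≤ m+1) (ha0 : 0 ≤ t 0)
    (hla : t (Fin.last (m+1)) ≤ a) (ht : StrictMono t)
    (hev : ∀ i, p.eval (t i) = (-1:ℝ)^(i:ℕ))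
    (hb : ∀ x ∈ Set.Icc (0:ℝ) a, |p.eval x| ≤ 1)
    (hroot : ∀ ξ : ℝ, (derivative p).IsRoot ξ →
      (∀ i : Fin (m+2), i ≠ 0 → i ≠ Fin.last (m+1) → ξ ≠ t i) → False) :
    t (Fin.last (m+1)) = a := by
  by_contra h
  have hlt : t (Fin.last (m+1)) < a := lt_of_le_of_ne hla h
  set il : Fin (m+2) := ⟨m, by omega⟩ with hil
  set g : ℝ → ℝ := fun x => (-1:ℝ)^(m+1) * p.eval x with hg
  have hille : il < Fin.last (m+1) := by simp [Fin.lt_def, hil, Fin.last]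
  have htil : t il < t (Fin.last (m+1)) := ht hille
  have hil0 : 0 ≤ t il := le_trans ha0 (ht.monotone (Fin.zero_le il))
  have hIsub : Set.Icc (t il) a ⊆ Set.Icc 0 a := Set.Icc_subset_Icc hil0 le_rfl
  have hglast : g (t (Fin.last (m+1))) = 1 := by
    simp only [hg, hev (Fin.last (m+1))]
    show ((-1:ℝ))^(m+1) * (-1)^((m+1 : ℕ)) = 1
    rw [← pow_add]
    exact Even.neg_one_pow ⟨m+1, by ring⟩
  have hgil : g (t il) = -1 := by
    simp only [hg, hev il]
    show ((-1:ℝ))^(m+1) * (-1)^((m : ℕ)) = -1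
    rw [← pow_add]
    exact Odd.neg_one_pow ⟨m, by ring⟩
  have hgcont : Continuous g := by
    rw [hg]; exact continuous_const.mul (Polynomial.continuous p)
  obtain ⟨ξ, hξI, hmax⟩ := isCompact_Icc.exists_isMaxOn
    (Set.nonempty_Icc.2 (le_trans htil.le hla))
    (hgcont.continuousOn (s := Set.Icc (t il) a))
  have hgle : ∀ x ∈ Set.Icc (t il) a, g x ≤ 1 := by
    intro x hx
    calc g x ≤ |g x| := le_abs_self _
      _ = |(-1:ℝ)^(m+1)| * |p.eval x| := abs_mul _ _
      _ = |p.eval x| := by simp [abs_pow]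
      _ ≤ 1 := hb x (hIsub hx)
  have hgξ : g ξ = 1 := by
    have h1 : g (t (Fin.last (m+1))) ≤ g ξ :=
      isMaxOn_iff.mp hmax _ ⟨htil.le, hla⟩
    rw [hglast] at h1
    exact le_antisymm (hgle ξ hξI) h1
  have hξneil : ξ ≠ t il := by
    intro hh
    rw [hh, hgil] at hgξ
    norm_num at hgξ
  obtain ⟨ξ', hξ'I, hmax'⟩ :
      ∃ ξ' ∈ Set.Ioo (t il) a, IsMaxOn g (Set.Icc (t il) a) ξ' := by
    rcases eq_or_ne ξ a with rfl | hnea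
    · refine ⟨t (Fin.last (m+1)), ⟨htil, hlt⟩, isMaxOn_iff.mpr fun x hx => ?_⟩
      rw [hglast, ← hgξ]
      exact isMaxOn_iff.mp hmax x hx
    · exact ⟨ξ, ⟨lt_of_le_of_ne hξI.1 (Ne.symm hξneil), lt_of_le_of_ne hξI.2 hnea⟩, hmax⟩
  have hloc : IsLocalMax g ξ' := hmax'.isLocalMax (Icc_mem_nhds hξ'I.1 hξ'I.2)
  have hder : (derivative p).IsRoot ξ' := by
    have hdz := hloc.deriv_eq_zero
    have : deriv g ξ' = (-1:ℝ)^(m+1) * (derivative p).eval ξ' := by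
      rw [hg, deriv_const_mul _ (Polynomial.differentiableAt p), Polynomial.deriv]
    rw [this] at hdz
    have hne : ((-1:ℝ))^(m+1) ≠ 0 := by simp
    exact (mul_eq_zero.mp hdz).resolve_left hne
  refine hroot ξ' hder fun i hi0 hil' hhe => ?_
  have : t i ≤ t il := by
    apply ht.monotone
    rw [Fin.le_def]
    show (i : ℕ) ≤ m
    have : (i : ℕ) < m + 1 := by
      have h1 : (i : ℕ) < m + 2 := i.isLt
      rcases Nat.lt_or_ge (i : ℕ) (m+1) with h | h
      · exact h
      · exfalso
        exact hil' (Fin.ext (by simp only [Fin.val_last]; omega))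
    omega
  rw [hhe] at hξ'I
  exact absurd hξ'I.1 (not_lt.2 this)

lemma key_identity (hd : p.natDegree ≤ m+1) (ha0 : 0 ≤ t 0)
    (hla : t (Fin.last (m+1)) ≤ a) (ht : StrictMono t)
    (hev : ∀ i, p.eval (t i) = (-1:ℝ)^(i:ℕ))
    (hb : ∀ x ∈ Set.Icc (0:ℝ) a, |p.eval x| ≤ 1)
    (ht0 : t 0 = 0) (htl : t (Fin.last (m+1)) = a) :
    C (((m:ℝ)+1)^2) * (1 - p^2) = X * (C a - X) * (derivative p)^2 := by
  classical
  have hp0 : p.eval 0 = 1 := by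
    have := hev 0
    rw [ht0] at this
    simpa using this
  have hpa : p.eval a = (-1:ℝ)^(m+1) := by
    have := hev (Fin.last (m+1))
    rw [htl] at this
    simpa [Fin.val_last] using this
  have hapos : (0:ℝ) < a := by
    rw [← ht0, ← htl]
    exact ht (by simp [Fin.lt_def, Fin.val_last])
  set H : ℝ[X] := C (((m:ℝ)+1)^2) * (1 - p^2) - X * (C a - X) * (derivative p)^2
    with hHdef
  rw [← sub_eq_zero]
  show H = 0
  by_contra hH
  -- evaluation facts
  have hsq : ∀ k : ℕ, ((-1:ℝ)^k)^2 = 1 := by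
    intro k
    rw [← pow_mul, mul_comm, pow_mul]
    norm_num
  have evalH0 : H.IsRoot 0 := by
    simp [IsRoot, hHdef, hp0]
  have evalHa : H.IsRoot a := by
    simp [IsRoot, hHdef, hpa, hsq (m+1)]
  have evalHt : ∀ i : Fin (m+2), i ≠ 0 → i ≠ Fin.last (m+1) → H.IsRoot (t i) := by
    intro i hi0 hil
    have h1 : (derivative p).eval (t i) = 0 := interior_root ha0 hla ht hev hb hi0 hil
    simp [IsRoot, hHdef, hev i, hsq (i:ℕ), h1]
  have hdH : derivative H = derivative p *
      (-(2 * C (((m:ℝ)+1)^2) * p) - (C a - 2*X) * derivative p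
        - 2*X*(C a - X)*(derivative (derivative p))) := by
    simp only [hHdef, derivative_sub, derivative_mul, derivative_pow, derivative_one,
      derivative_X, derivative_C, Nat.cast_ofNat, map_ofNat]
    ring
  have evalH't : ∀ i : Fin (m+2), i ≠ 0 → i ≠ Fin.last (m+1) →
      (derivative H).IsRoot (t i) := by
    intro i hi0 hil
    have h1 : (derivative p).eval (t i) = 0 := interior_root ha0 hla ht hev hb hi0 hil
    simp [IsRoot, hdH, h1]
  -- the node finset
  set T : Finset ℝ := ((Finset.univ.erase 0).erase (Fin.last (m+1))).image t with hT
  have hlast0 : (Fin.last (m+1)) ≠ (0 : Fin (m+2)) := by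
    intro h
    have := congrArg Fin.val h
    simp [Fin.last] at this
  have hTcard : T.card = m := by
    rw [hT, Finset.card_image_of_injective _ ht.injective,
      Finset.card_erase_of_mem (by simp [Finset.mem_erase, hlast0]),
      Finset.card_erase_of_mem (by simp)]
    simp
  have hmemT : ∀ r ∈ T, ∃ i : Fin (m+2), i ≠ 0 ∧ i ≠ Fin.last (m+1) ∧ r = t i := by
    intro r hr
    rw [hT, Finset.mem_image] at hr
    obtain ⟨i, hiT, rfl⟩ := hr
    simp [Finset.mem_erase] at hiT
    exact ⟨i, hiT.2, hiT.1, rfl⟩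
  have h0T : (0:ℝ) ∉ T := by
    intro h
    obtain ⟨i, hi0, _, hit⟩ := hmemT 0 h
    have : t 0 < t i := ht (Fin.pos_of_ne_zero hi0)
    rw [ht0, ← hit] at this
    exact lt_irrefl _ this
  have haT : a ∉ T := by
    intro h
    obtain ⟨i, _, hil, hit⟩ := hmemT a h
    have : t i < t (Fin.last (m+1)) := ht (lt_of_le_of_ne (Fin.le_last i) hil)
    rw [htl, ← hit] at this
    exact lt_irrefl _ this
  have h0a : (0:ℝ) ≠ a := hapos.ne
  -- divisibility
  set e : ℝ → ℕ := fun r => if r ∈ T then 2 else 1 with he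
  set f : ℝ → ℝ[X] := fun r => (X - C r)^(e r) with hf
  set S : Finset ℝ := insert 0 (insert a T) with hS
  have hpair : (↑S : Set ℝ).Pairwise (Function.onFun IsCoprime f) := by
    intro r _ s _ hrs
    exact (pairwise_coprime_X_sub_C (Function.injective_id) hrs).pow
  have hdvd : ∀ r ∈ S, f r ∣ H := by
    intro r hr
    rw [hS, Finset.mem_insert, Finset.mem_insert] at hr
    rcases hr with rfl | rfl | hr
    · rw [hf]
      simp only [he, if_neg h0T, pow_one]
      exact dvd_iff_isRoot.2 evalH0
    · rw [hf]
      simp only [he, if_neg haT, pow_one]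
      exact dvd_iff_isRoot.2 evalHa
    · obtain ⟨i, hi0, hil, rfl⟩ := hmemT r hr
      rw [hf]
      simp only [he, if_pos hr]
      exact sq_dvd_of_root_root_deriv (evalHt i hi0 hil) (evalH't i hi0 hil)
  have hprod : ∏ r ∈ S, f r ∣ H := Finset.prod_dvd_of_coprime hpair hdvd
  have hfne : ∀ r ∈ S, f r ≠ 0 := fun r _ => pow_ne_zero _ (X_sub_C_ne_zero r)
  have hprodDeg : (∏ r ∈ S, f r).natDegree = 2*m+2 := by
    rw [natDegree_prod _ _ hfne]
    have hfd : ∀ r, (f r).natDegree = e r := by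
      intro r
      rw [hf, natDegree_pow, natDegree_X_sub_C, mul_one]
    rw [Finset.sum_congr rfl (fun r _ => hfd r)]
    rw [hS, Finset.sum_insert (by simp [Finset.mem_insert, h0a, h0T]),
      Finset.sum_insert haT]
    have : ∑ r ∈ T, e r = 2*m := by
      have h2 : ∀ r ∈ T, e r = 2 := fun r hr => by simp only [he, if_pos hr]
      rw [Finset.sum_congr rfl h2, Finset.sum_const, hTcard]
      ring
    rw [this]
    simp only [he, if_neg h0T, if_neg haT]
    ring
  have hle : 2*m+2 ≤ H.natDegree := by
    rw [← hprodDeg]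
    exact natDegree_le_of_dvd hprod hH
  -- upper bound and top coefficient
  have hq' : (derivative p).natDegree ≤ m :=
    (natDegree_derivative_le p).trans (Nat.sub_le_sub_right hd 1)
  have hub : H.natDegree ≤ 2*m+2 := by
    rw [hHdef]
    apply (natDegree_sub_le _ _).trans
    apply max_le
    · apply (natDegree_C_mul_le _ _).trans
      apply (natDegree_sub_le _ _).trans
      apply max_le (by simp)
      rw [natDegree_pow]
      omega
    · apply (natDegree_mul_le).trans
      have h1 : (X * (C a - X)).natDegree ≤ 2 := by
        apply (natDegree_mul_le).trans
        have : (C a - X).natDegree ≤ 1 := by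
          apply (natDegree_sub_le _ _).trans
          simp
        simp only [natDegree_X]
        omega
      have h2 : ((derivative p)^2).natDegree ≤ 2*m := by
        rw [natDegree_pow]
        omega
      omega
  -- top coefficient vanishes
  have hidx : 2*m+2 = (m+1)+(m+1) := by ring
  have hc1 : (p^2).coeff (2*m+2) = p.coeff (m+1) * p.coeff (m+1) := by
    rw [pow_two, hidx, coeff_mul_add_eq_of_natDegree_le hd hd]
  have hterm : X * (C a - X) * (derivative p)^2
      = C a * (X * (derivative p * derivative p))
        - X * (X * (derivative p * derivative p)) := by ring
  have hz1 : (derivative p * derivative p).coeff (2*m+1) = 0 := by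
    apply coeff_eq_zero_of_natDegree_lt
    apply lt_of_le_of_lt (natDegree_mul_le)
    omega
  have hz2 : (derivative p * derivative p).coeff (2*m)
      = (p.coeff (m+1) * ((m:ℝ)+1)) * (p.coeff (m+1) * ((m:ℝ)+1)) := by
    rw [show 2*m = m+m from by ring, coeff_mul_add_eq_of_natDegree_le hq' hq',
      coeff_derivative]
  have hcoeff : H.coeff (2*m+2) = 0 := by
    rw [hHdef, coeff_sub, coeff_C_mul, coeff_sub, hc1, coeff_one, hterm, coeff_sub,
      coeff_C_mul, show 2*m+2 = (2*m+1)+1 from by ring, coeff_X_mul, coeff_X_mul, coeff_X_mul,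
      hz1, hz2]
    norm_num
    ring
  have hdeg : H.natDegree = 2*m+2 := le_antisymm hub hle
  have hlc : H.leadingCoeff = 0 := by
    rw [leadingCoeff, hdeg]
    exact hcoeff
  exact hH (leadingCoeff_eq_zero.mp hlc)
lemma cheb_ode {m : ℕ} {a : ℝ} {p : ℝ[X]} (hp' : derivative p ≠ 0)
    (hid : C (((m:ℝ)+1)^2) * (1 - p^2) = X * (C a - X) * (derivative p)^2) :
    2*X*(C a - X)*(derivative (derivative p)) + (C a - 2*X)*(derivative p)
      + 2 * C (((m:ℝ)+1)^2) * p = 0 := by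
  have hd := congrArg derivative hid
  simp only [derivative_mul, derivative_sub, derivative_pow, derivative_one,
    derivative_X, derivative_C, Nat.cast_ofNat, map_ofNat] at hd
  have h2 : derivative p * (2*X*(C a - X)*(derivative (derivative p))
      + (C a - 2*X)*(derivative p) + 2 * C (((m:ℝ)+1)^2) * p) = derivative p * 0 := by
    rw [mul_zero]
    linear_combination -hd
  exact mul_left_cancel₀ hp' h2

lemma ode_zero {a c : ℝ} (ha : a ≠ 0) {q : ℝ[X]}
    (h : 2*X*(C a - X)*(derivative (derivative q)) + (C a - 2*X)*(derivative q)
      + 2 * C c * q = 0) (h0 : q.coeff 0 = 0) : q = 0 := by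
  have hE : 2*X*(C a - X)*(derivative (derivative q)) + (C a - 2*X)*(derivative q)
      + 2 * C c * q
      = 2 * (C a * (X * (derivative (derivative q))))
        - 2*(X*(X*(derivative (derivative q)))) + C a * (derivative q)
        - 2*(X*(derivative q)) + 2 * (C c * q) := by ring
  rw [hE] at h
  have hrec : ∀ k : ℕ, a*((k:ℝ)+1)*(2*(k:ℝ)+1) * q.coeff (k+1)
      + 2*(c - (k:ℝ)^2) * q.coeff k = 0 := by
    intro k
    have hco := congrArg (fun r : ℝ[X] => r.coeff k) h
    simp only [coeff_add, coeff_sub, coeff_zero] at hco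
    match k with
    | 0 =>
      simp only [coeff_ofNat_mul, coeff_C_mul, mul_coeff_zero, coeff_X_zero,
        coeff_derivative, coeff_C_zero, zero_mul, mul_zero, coeff_zero] at hco
      push_cast at hco ⊢
      linear_combination hco
    | 1 =>
      simp only [coeff_ofNat_mul, coeff_C_mul, coeff_X_mul, coeff_derivative,
        mul_coeff_zero, coeff_X_zero, coeff_C_zero, zero_mul, mul_zero] at hco
      push_cast at hco ⊢
      linear_combination hco
    | (j+2) =>
      simp only [coeff_ofNat_mul, coeff_C_mul, coeff_X_mul, coeff_derivative] at hco
      simp only [show j+1+1+1 = j+3 from by omega, show j+2+1 = j+3 from by omega,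
        show j+1+1 = j+2 from by omega] at hco ⊢
      push_cast at hco ⊢
      linear_combination hco
  have hall : ∀ k : ℕ, q.coeff k = 0 := by
    intro k
    induction k with
    | zero => exact h0
    | succ j ih =>
      have := hrec j
      rw [ih, mul_zero, add_zero] at this
      have hne : a*((j:ℝ)+1)*(2*(j:ℝ)+1) ≠ 0 := by
        apply mul_ne_zero
        apply mul_ne_zero ha
        · positivity
        · positivity
      exact (mul_eq_zero.mp this).resolve_left hne
  exact Polynomial.ext fun k => by rw [hall k, coeff_zero]

end

/-- A polynomial equioscillates with modulus 1 on `[0,a]` with `n+1` nodes. -/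
def Equioscillates (n : ℕ) (a : ℝ) (p : ℝ[X]) : Prop :=
  ∃ t : Fin (n + 1) → ℝ, StrictMono t ∧ 0 ≤ t 0 ∧ t (Fin.last n) ≤ a ∧
    ∀ i : Fin (n + 1), p.eval (t i) = (-1 : ℝ) ^ (i : ℕ)

/-- uniqueness of an equioscillating polynomial of degree at most `n`
that is bounded by 1 in absolute value on `[0,a]`. -/
theorem stmt_5 (n : ℕ) (a : ℝ) (p₁ p₂ : ℝ[X])
    (hd₁ : p₁.natDegree ≤ n) (hd₂ : p₂.natDegree ≤ n)
    (he₁ : Equioscillates n a p₁) (he₂ : Equioscillates n a p₂)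
    (hb₁ : ∀ x ∈ Set.Icc (0 : ℝ) a, |p₁.eval x| ≤ 1)
    (hb₂ : ∀ x ∈ Set.Icc (0 : ℝ) a, |p₂.eval x| ≤ 1) :
    p₁ = p₂ := by
  obtain ⟨t₁, ht₁, h01, hl1, hev1⟩ := he₁
  obtain ⟨t₂, ht₂, h02, hl2, hev2⟩ := he₂
  match n, hd₁, hd₂, t₁, ht₁, h01, hl1, hev1, t₂, ht₂, h02, hl2, hev2 with
  | 0, hd₁, hd₂, t₁, ht₁, h01, hl1, hev1, t₂, ht₂, h02, hl2, hev2 =>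
    have e1 : p₁ = C (p₁.coeff 0) := eq_C_of_natDegree_le_zero hd₁
    have e2 : p₂ = C (p₂.coeff 0) := eq_C_of_natDegree_le_zero hd₂
    have v1 : p₁.coeff 0 = 1 := by
      have := hev1 0
      rw [e1] at this
      simpa using this
    have v2 : p₂.coeff 0 = 1 := by
      have := hev2 0
      rw [e2] at this
      simpa using this
    rw [e1, e2, v1, v2]
  | (m+1), hd₁, hd₂, t₁, ht₁, h01, hl1, hev1, t₂, ht₂, h02, hl2, hev2 =>
    have hp1' : derivative p₁ ≠ 0 := deriv_ne_zero hd₁ ht₁ hev1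
    have hp2' : derivative p₂ ≠ 0 := deriv_ne_zero hd₂ ht₂ hev2
    have hroot1 : ∀ ξ : ℝ, (derivative p₁).IsRoot ξ →
        (∀ i : Fin (m+2), i ≠ 0 → i ≠ Fin.last (m+1) → ξ ≠ t₁ i) → False :=
      fun ξ hξ hne => no_extra_root hd₁ h01 hl1 ht₁ hev1 hb₁ hξ hne
    have hroot2 : ∀ ξ : ℝ, (derivative p₂).IsRoot ξ →
        (∀ i : Fin (m+2), i ≠ 0 → i ≠ Fin.last (m+1) → ξ ≠ t₂ i) → False :=
      fun ξ hξ hne => no_extra_root hd₂ h02 hl2 ht₂ hev2 hb₂ hξ hne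
    have ht01 : t₁ 0 = 0 := t_zero_eq hd₁ h01 hl1 ht₁ hev1 hb₁ hroot1
    have ht02 : t₂ 0 = 0 := t_zero_eq hd₂ h02 hl2 ht₂ hev2 hb₂ hroot2
    have htl1 : t₁ (Fin.last (m+1)) = a := t_last_eq hd₁ h01 hl1 ht₁ hev1 hb₁ hroot1
    have htl2 : t₂ (Fin.last (m+1)) = a := t_last_eq hd₂ h02 hl2 ht₂ hev2 hb₂ hroot2
    have hid1 := key_identity hd₁ h01 hl1 ht₁ hev1 hb₁ ht01 htl1
    have hid2 := key_identity hd₂ h02 hl2 ht₂ hev2 hb₂ ht02 htl2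
    have hode1 := cheb_ode hp1' hid1
    have hode2 := cheb_ode hp2' hid2
    have hapos : (0:ℝ) < a := by
      rw [← ht01, ← htl1]
      exact ht₁ (by simp [Fin.lt_def, Fin.val_last])
    have hq : 2*X*(C a - X)*(derivative (derivative (p₁ - p₂)))
        + (C a - 2*X)*(derivative (p₁ - p₂))
        + 2 * C (((m:ℝ)+1)^2) * (p₁ - p₂) = 0 := by
      simp only [derivative_sub]
      linear_combination hode1 - hode2
    have h0 : (p₁ - p₂).coeff 0 = 0 := by
      rw [coeff_sub, coeff_zero_eq_eval_zero, coeff_zero_eq_eval_zero]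
      have e1 : p₁.eval 0 = 1 := by
        have := hev1 0
        rw [ht01] at this
        simpa using this
      have e2 : p₂.eval 0 = 1 := by
        have := hev2 0
        rw [ht02] at this
        simpa using this
      rw [e1, e2, sub_self]
    have := ode_zero hapos.ne' hq h0
    exact sub_eq_zero.mp this
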